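/- Let μ_coh(q,ℰ) = 1 - exp(-ηℰ/q) and q*(ℰ) = (ηℰ/2)·log(1/ℰ). Then for fixed η ∈ (0,1], as ℰ → 0+, I_Z(q*(ℰ), μ_coh(q*(ℰ),ℰ))/(ηℰ) = log(1/(ηℰ)) - log log(1/ℰ) + log 2 - 1 + o(1). -/

import Mathlib

open Real Filter

noncomputable def H2 (x : ℝ) : ℝ := x * Real.log (1 / x) + (1 - x) * Real.log (1 / (1 - x))

noncomputable def IZ (q μ : ℝ) : ℝ := H2 (q * μ) - q * H2 μ

noncomputable def qstar (η E : ℝ) : ℝ := η * E / 2 * Real.log (1 / E)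

noncomputable def μcoh (η q E : ℝ) : ℝ := 1 - Real.exp (-(η * E / q))

lemma slope_exp_neg : Tendsto (fun t : ℝ => (1 - Real.exp (-t)) / t) (nhdsWithin 0 (Set.Ioi 0)) (nhds 1) := by
  have h : HasDerivAt (fun t : ℝ => Real.exp (-t)) (-1) 0 := by
    have h0 : HasDerivAt (fun t : ℝ => -t) (-1) 0 := (hasDerivAt_id (0:ℝ)).neg
    exact ((Real.hasDerivAt_exp (-(0:ℝ))).comp 0 h0).congr_deriv (by simp)
  have := (hasDerivAt_iff_tendsto_slope.mp h).mono_left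
      (nhdsWithin_mono _ (fun x hx => ne_of_gt hx : Set.Ioi (0:ℝ) ⊆ {(0:ℝ)}ᶜ))
  have h2 : Tendsto (fun t : ℝ => -((Real.exp (-t) - 1) / t)) (nhdsWithin 0 (Set.Ioi 0)) (nhds 1) := by
    simpa [slope_def_field, div_eq_mul_inv] using this.neg
  refine h2.congr (fun t => by ring)

lemma slope_log_one_sub : Tendsto (fun x : ℝ => -(Real.log (1 - x) / x)) (nhdsWithin 0 (Set.Ioi 0)) (nhds 1) := by
  have h : HasDerivAt (fun x : ℝ => Real.log (1 - x)) (-1) 0 := by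
    have h0 : HasDerivAt (fun x : ℝ => 1 - x) (-1) 0 := (hasDerivAt_id (0:ℝ)).const_sub 1
    have := (Real.hasDerivAt_log (by norm_num : (1:ℝ) - 0 ≠ 0)).comp 0 h0
    norm_num at this
    exact this
  have := (hasDerivAt_iff_tendsto_slope.mp h).mono_left
      (nhdsWithin_mono _ (fun x hx => ne_of_gt hx : Set.Ioi (0:ℝ) ⊆ {(0:ℝ)}ᶜ))
  simpa [slope_def_field, div_eq_mul_inv] using this.neg

lemma second_order : Tendsto (fun t : ℝ => (1 - Real.exp (-t) - t) / t^2)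
    (nhdsWithin 0 (Set.Ioi 0)) (nhds (-(1/2))) := by
  have hf : ∀ t : ℝ, HasDerivAt (fun t : ℝ => 1 - Real.exp (-t) - t) (-Real.exp (-t) * (-1) - 1) t := by
    intro t
    have h0 : HasDerivAt (fun t : ℝ => -t) (-1) t := (hasDerivAt_id t).neg
    have he : HasDerivAt (fun t : ℝ => Real.exp (-t)) (Real.exp (-t) * (-1)) t :=
      (Real.hasDerivAt_exp (-t)).comp t h0
    exact ((he.const_sub 1).sub (hasDerivAt_id t)).congr_deriv (by ring)
  have hg : ∀ t : ℝ, HasDerivAt (fun t : ℝ => t^2) (2*t) t := by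
    intro t; simpa using (hasDerivAt_pow 2 t)
  apply HasDerivAt.lhopital_zero_nhdsGT (f' := fun t => -Real.exp (-t) * (-1) - 1)
      (g' := fun t => 2*t)
  · exact Eventually.of_forall (fun t => hf t)
  · exact Eventually.of_forall (fun t => hg t)
  · filter_upwards [self_mem_nhdsWithin] with t ht
    exact mul_ne_zero two_ne_zero (ne_of_gt ht)
  · have : Tendsto (fun t : ℝ => 1 - Real.exp (-t) - t) (nhds 0) (nhds (1 - Real.exp (-0) - 0)) :=
      (Continuous.sub (continuous_const.sub (Real.continuous_exp.comp continuous_neg)) continuous_id).tendsto 0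
    simpa using this.mono_left nhdsWithin_le_nhds
  · have : Tendsto (fun t : ℝ => t^2) (nhds (0:ℝ)) (nhds ((0:ℝ)^2)) := (continuous_pow 2).tendsto 0
    simpa using this.mono_left nhdsWithin_le_nhds
  · have h2 := slope_exp_neg.neg.div_const 2
    have : Tendsto (fun t : ℝ => -((1 - Real.exp (-t)) / t) / 2) (nhdsWithin 0 (Set.Ioi 0)) (nhds (-(1/2))) := by
      convert h2 using 2; norm_num
    refine this.congr' ?_
    filter_upwards [self_mem_nhdsWithin] with t ht
    have : t ≠ 0 := ne_of_gt ht
    field_simp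
    ring_nf

lemma f_over_x : Tendsto (fun x : ℝ => (1-x) * Real.log (1/(1-x)) / x)
    (nhdsWithin 0 (Set.Ioi 0)) (nhds 1) := by
  have h1 : Tendsto (fun x : ℝ => (1:ℝ) - x) (nhdsWithin 0 (Set.Ioi 0)) (nhds 1) := by
    have : Continuous (fun x : ℝ => (1:ℝ) - x) := continuous_const.sub continuous_id
    simpa using (this.tendsto 0).mono_left nhdsWithin_le_nhds
  have := h1.mul slope_log_one_sub
  rw [mul_one] at this
  refine this.congr (fun x => ?_)
  rw [one_div, Real.log_inv]
  ring

lemma t_log_t : Tendsto (fun t : ℝ => t * Real.log t) (nhdsWithin 0 (Set.Ioi 0)) (nhds 0) := by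
  have := tendsto_log_mul_rpow_nhdsGT_zero one_pos
  simp only [Real.rpow_one] at this
  exact this.congr (fun t => mul_comm _ _)

lemma lemA : Tendsto (fun t : ℝ => ((1 - Real.exp (-t))/t - 1) * (2/t))
    (nhdsWithin 0 (Set.Ioi 0)) (nhds (-1)) := by
  have h := second_order.const_mul (2:ℝ)
  have h2 : Tendsto (fun t : ℝ => 2 * ((1 - Real.exp (-t) - t)/t^2))
      (nhdsWithin 0 (Set.Ioi 0)) (nhds (-1)) := by
    convert h using 2; norm_num
  refine h2.congr' ?_
  filter_upwards [self_mem_nhdsWithin] with t ht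
  have htne : t ≠ 0 := ne_of_gt ht
  field_simp

lemma lemB : Tendsto (fun t : ℝ => ((1 - Real.exp (-t))/t - 1) * Real.log t)
    (nhdsWithin 0 (Set.Ioi 0)) (nhds 0) := by
  have h := second_order.mul t_log_t
  rw [mul_zero] at h
  refine h.congr' ?_
  filter_upwards [self_mem_nhdsWithin] with t ht
  have htne : t ≠ 0 := ne_of_gt ht
  field_simp

theorem coherent_Z_efficiency (η : ℝ) (hη : η ∈ Set.Ioc (0 : ℝ) 1) :
    Tendsto (fun E : ℝ =>
        IZ (qstar η E) (μcoh η (qstar η E) E) / (η * E)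
          - (Real.log (1 / (η * E)) - Real.log (Real.log (1 / E)) + Real.log 2 - 1))
      (nhdsWithin 0 (Set.Ioi 0)) (nhds 0) := by
  obtain ⟨hη0, hη1⟩ := hη
  set F := nhdsWithin (0:ℝ) (Set.Ioi 0) with hF
  set T : ℝ → ℝ := fun E => 2 / Real.log (1/E) with hTdef
  -- basic eventual facts
  have hEsmall : ∀ᶠ E in F, 0 < E ∧ E < 1 := by
    filter_upwards [Ioo_mem_nhdsGT (by norm_num : (0:ℝ) < 1)] with E hE
    exact ⟨hE.1, hE.2⟩
  have hLpos : ∀ᶠ E in F, 0 < Real.log (1/E) := by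
    filter_upwards [hEsmall] with E ⟨hE0, hE1⟩
    exact Real.log_pos (one_lt_one_div hE0 hE1)
  -- T tends to 0 from the right
  have hlogtop : Tendsto (fun E : ℝ => Real.log (1/E)) F atTop := by
    have h1 : Tendsto (fun E : ℝ => 1/E) F atTop := by
      simpa [one_div] using tendsto_inv_nhdsGT_zero
    exact Real.tendsto_log_atTop.comp h1
  have hTnhds : Tendsto T F (nhds 0) := by
    have := hlogtop.inv_tendsto_atTop.const_mul (2:ℝ)
    rw [mul_zero] at this
    exact this.congr (fun E => by rw [hTdef]; simp [div_eq_mul_inv])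
  have hT : Tendsto T F (nhdsWithin 0 (Set.Ioi 0)) := by
    refine tendsto_nhdsWithin_of_tendsto_nhds_of_eventually_within _ hTnhds ?_
    filter_upwards [hLpos] with E hL
    exact div_pos two_pos hL
  -- qstar tends to 0
  have hq0 : Tendsto (fun E : ℝ => qstar η E) F (nhds 0) := by
    have h := (tendsto_log_mul_rpow_nhdsGT_zero one_pos).const_mul (-(η/2))
    simp only [Real.rpow_one, mul_zero] at h
    refine h.congr (fun E => ?_)
    rw [qstar, one_div, Real.log_inv]
    ring
  have hqsmall : ∀ᶠ E in F, qstar η E < 1 := hq0.eventually_lt_const one_pos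
  have hqpos : ∀ᶠ E in F, 0 < qstar η E := by
    filter_upwards [hEsmall, hLpos] with E hE hL
    rw [qstar]
    have := hE.1
    positivity
  have hdiv : ∀ᶠ E in F, η * E / qstar η E = T E := by
    filter_upwards [hEsmall, hLpos] with E hE hL
    obtain ⟨hE0, hE1⟩ := hE
    rw [qstar, hTdef]
    have hd1 : 0 < η * E / 2 * Real.log (1/E) := mul_pos (by positivity) hL
    rw [div_eq_div_iff (ne_of_gt hd1) (ne_of_gt hL)]
    ring
  have hμmatch : ∀ᶠ E in F, μcoh η (qstar η E) E = 1 - Real.exp (-(T E)) := by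
    filter_upwards [hdiv] with E hd
    rw [μcoh, hd]
  have hTpos : ∀ᶠ E in F, 0 < T E := by
    filter_upwards [hLpos] with E hL
    exact div_pos two_pos hL
  have hμpos : ∀ᶠ E in F, 0 < μcoh η (qstar η E) E := by
    filter_upwards [hμmatch, hTpos] with E hm hTp
    rw [hm]
    have : Real.exp (-(T E)) < 1 := Real.exp_lt_one_iff.mpr (by linarith)
    linarith
  have hμten : Tendsto (fun E : ℝ => μcoh η (qstar η E) E) F (nhds 0) := by
    have hc : Tendsto (fun t : ℝ => 1 - Real.exp (-t)) (nhds (0:ℝ)) (nhds 0) := by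
      have hcont : Continuous (fun t : ℝ => 1 - Real.exp (-t)) :=
        continuous_const.sub (Real.continuous_exp.comp continuous_neg)
      simpa using hcont.tendsto 0
    refine (hc.comp hTnhds).congr' ?_
    filter_upwards [hμmatch] with E hm
    simp only [Function.comp_apply]
    rw [hm]
  have hXin : Tendsto (fun E : ℝ => qstar η E * μcoh η (qstar η E) E) F
      (nhdsWithin 0 (Set.Ioi 0)) := by
    refine tendsto_nhdsWithin_of_tendsto_nhds_of_eventually_within _ ?_ ?_
    · simpa using hq0.mul hμten
    · filter_upwards [hqpos, hμpos] with E h1 h2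
      exact mul_pos h1 h2
  -- the big combined limit
  have hA := lemA.comp hT
  have hB := lemB.comp hT
  have hmu1 := slope_exp_neg.comp hT
  have hsub : Tendsto (fun E : ℝ => (1 - Real.exp (-(T E)))/(T E) - 1) F (nhds 0) := by
    simpa using hmu1.sub_const 1
  have hC : Tendsto (fun E : ℝ => ((1 - Real.exp (-(T E)))/(T E) - 1) * Real.log η) F (nhds 0) := by
    simpa using hsub.mul_const (Real.log η)
  have hD := (f_over_x.comp hXin).mul hmu1
  have hexp1 : Tendsto (fun E : ℝ => Real.exp (-(T E))) F (nhds 1) := by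
    have hc : Tendsto (fun t : ℝ => Real.exp (-t)) (nhds (0:ℝ)) (nhds 1) := by
      simpa [Function.comp_def] using (Real.continuous_exp.comp continuous_neg).tendsto 0
    exact hc.comp hTnhds
  have big : Tendsto (fun E : ℝ =>
      (((1 - Real.exp (-(T E)))/(T E) - 1) * (2/(T E))
        + ((1 - Real.exp (-(T E)))/(T E) - 1) * Real.log (T E)
        - ((1 - Real.exp (-(T E)))/(T E) - 1) * Real.log η)
      + ((1 - qstar η E * μcoh η (qstar η E) E)
          * Real.log (1/(1 - qstar η E * μcoh η (qstar η E) E))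
          / (qstar η E * μcoh η (qstar η E) E))
        * ((1 - Real.exp (-(T E)))/(T E))
      - Real.exp (-(T E)) + 1) F (nhds 0) := by
    have h := ((((hA.add hB).sub hC).add hD).sub hexp1).add_const (1:ℝ)
    have hval : ((-1 : ℝ) + 0 - 0 + 1 * 1 - 1 + 1) = 0 := by norm_num
    rw [hval] at h
    exact h.congr (fun E => by simp only [Function.comp_apply])
  refine Filter.Tendsto.congr' ?_ big
  filter_upwards [hEsmall, hLpos, hqsmall, hqpos, hμpos, hμmatch, hTpos, hdiv] with E hE hL hq1 hqp hμp hμm hTp hdv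
  obtain ⟨hE0, hE1⟩ := hE
  set q := qstar η E with hqd
  set μ := μcoh η q E with hμd
  set L := Real.log (1/E) with hLd
  set t := T E with htd
  have ht2 : t = 2 / L := by rw [htd, hTdef]
  have tpos : 0 < t := hTp
  have hμ : μ = 1 - Real.exp (-t) := hμm
  have hμ1 : μ < 1 := by
    rw [hμ]
    have : (0:ℝ) < Real.exp (-t) := Real.exp_pos _
    linarith
  have hx0 : 0 < q * μ := mul_pos hqp hμp
  have hx1 : q * μ < 1 := lt_trans (mul_lt_of_lt_one_right hqp hμ1) hq1
  have hqt : η * E = q * t := by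
    rw [hqd, qstar, ht2, hLd]
    field_simp
    exact (div_self (ne_of_gt hL)).symm
  have hlogq : Real.log q = Real.log η + Real.log E + Real.log L - Real.log 2 := by
    rw [hqd, qstar, ← hLd]
    rw [Real.log_mul (by positivity : η * E / 2 ≠ 0) (ne_of_gt hL)]
    rw [Real.log_div (by positivity : η * E ≠ 0) two_ne_zero]
    rw [Real.log_mul (ne_of_gt hη0) (ne_of_gt hE0)]
    ring
  have hlt : Real.log t = Real.log 2 - Real.log L := by
    rw [ht2, Real.log_div two_ne_zero (ne_of_gt hL)]
  have hLE : L = -Real.log E := by rw [hLd, one_div, Real.log_inv]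
  have h2t : 2 / t = L := by rw [ht2]; field_simp
  have hlogq2 : Real.log q = -(2/t) - Real.log t + Real.log η := by
    rw [h2t, hlt, hlogq, hLE]; ring
  have hbr : Real.log (1/(η*E)) - Real.log L + Real.log 2 - 1 = -Real.log q - 1 := by
    rw [one_div, Real.log_inv, Real.log_mul (ne_of_gt hη0) (ne_of_gt hE0), hlogq]
    ring
  have hexpμ : Real.exp (-t) = 1 - μ := by rw [hμ]; ring
  have hH2x : H2 (q*μ) = -(q*μ*(Real.log q + Real.log μ)) + (1 - q*μ)*Real.log (1/(1-q*μ)) := by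
    rw [H2, show (1:ℝ)/(q*μ) = (q*μ)⁻¹ from one_div _, Real.log_inv,
      Real.log_mul (ne_of_gt hqp) (ne_of_gt hμp)]
    ring
  have hH2μ : H2 μ = -(μ*Real.log μ) + (1-μ)*t := by
    rw [H2, show (1:ℝ)/μ = μ⁻¹ from one_div _, Real.log_inv,
      show (1:ℝ)/(1-μ) = (1-μ)⁻¹ from one_div _, Real.log_inv,
      show (1:ℝ)-μ = Real.exp (-t) from hexpμ.symm, Real.log_exp]
    ring
  rw [hbr, hqt, IZ, hH2x, hH2μ, hexpμ, hlogq2]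
  have hqne := ne_of_gt hqp
  have htne := ne_of_gt tpos
  have hμne := ne_of_gt hμp
  field_simp
  ring
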